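/- arXiv:1405.1193 — 2 statements merged into one kernel-verified Lean document; each statement's English description precedes it below -/
import Mathlib

section
/- Let κ be a regular cardinal and μ a (κ,κ⁺)-cardinal. Then μ is cofinal in (℘_κ(κ⁺), ⊆), i.e., every subset of κ⁺ of cardinality < κ is contained in some element of μ. -/
open Set Cardinal Ordinal

noncomputable section

/-- Lower a (small) ordinal of `Ordinal.{1}` to `Ordinal.{0}` (the inverse of `Ordinal.lift`
on its range). -/
noncomputable def olower (o : Ordinal.{1}) : Ordinal.{0} :=
  sInf {a : Ordinal.{0} | Ordinal.lift.{1} a = o}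

/-- The order type of a set of ordinals. -/
noncomputable def otp (A : Set Ordinal.{0}) : Ordinal.{0} :=
  olower (Ordinal.type (Subrel ((· < ·) : Ordinal → Ordinal → Prop) (· ∈ A)))

/-- The canonical order-preserving transfer map from a set of ordinals `X` to a set of
ordinals `Y` of the same order type: an element `a ∈ X` is sent to the unique element of `Y`
occupying the same position. -/
noncomputable def omap (X Y : Set Ordinal) (a : Ordinal) : Ordinal :=
  sInf {b | b ∈ Y ∧ otp (Y ∩ Set.Iio b) = otp (X ∩ Set.Iio a)}

/-- `IsStar X₁ X₂ X` says `X = X₁ * X₂`: `X₁` and `X₂` have the same order type,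
`X = X₁ ∪ X₂`, and `X₁ ∩ X₂ < X₁ \ X₂ < X₂ \ X₁` elementwise. -/
def IsStar (X₁ X₂ X : Set Ordinal) : Prop :=
  otp X₁ = otp X₂ ∧ X = X₁ ∪ X₂ ∧
  (∀ a ∈ X₁ ∩ X₂, ∀ b ∈ X₁ \ X₂, a < b) ∧
  (∀ b ∈ X₁ \ X₂, ∀ c ∈ X₂ \ X₁, b < c)

set_option linter.deprecated false in
/-- A `(κ,κ⁺)`-cardinal (a neat simplified `(κ,1)`-morass presented as a family of sets):
a family `μ ⊆ ℘_κ(κ⁺)` which is well-founded under strict inclusion, locally small,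
homogeneous, directed, locally almost directed, covers `κ⁺` and is neat. -/
structure TwoCardinal (κ : Cardinal.{0}) where
  mu : Set (Set Ordinal)
  mem_sub : ∀ X ∈ mu, X ⊆ Set.Iio (Order.succ κ).ord
  mem_small : ∀ X ∈ mu, (otp X).card < κ
  wf : WellFounded fun X Y : mu => (X : Set Ordinal) ⊂ (Y : Set Ordinal)
  locSmall : ∀ X : mu,
    #{Z : mu // (Z : Set Ordinal) ⊂ (X : Set Ordinal)} < Cardinal.lift.{1} κ
  homog : ∀ X Y : mu, (wf.apply X).rank = (wf.apply Y).rank →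
    otp (X : Set Ordinal) = otp (Y : Set Ordinal) ∧
    {Z | Z ∈ mu ∧ Z ⊂ (Y : Set Ordinal)} =
      (fun Z => omap (X : Set Ordinal) (Y : Set Ordinal) '' Z) ''
        {Z | Z ∈ mu ∧ Z ⊂ (X : Set Ordinal)}
  directed : ∀ X ∈ mu, ∀ Y ∈ mu, ∃ Z ∈ mu, X ⊆ Z ∧ Y ⊆ Z
  locAlmostDirected : ∀ X : mu,
    (∀ Z₁ ∈ mu, ∀ Z₂ ∈ mu, Z₁ ⊂ (X : Set Ordinal) → Z₂ ⊂ (X : Set Ordinal) →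
      ∃ Z ∈ mu, Z ⊂ (X : Set Ordinal) ∧ Z₁ ⊆ Z ∧ Z₂ ⊆ Z) ∨
    (∃ X₁ X₂ : mu, (wf.apply X₁).rank = (wf.apply X₂).rank ∧
      IsStar (X₁ : Set Ordinal) (X₂ : Set Ordinal) (X : Set Ordinal) ∧
      {Z | Z ∈ mu ∧ Z ⊂ (X : Set Ordinal)} =
        {Z | Z ∈ mu ∧ Z ⊂ (X₁ : Set Ordinal)} ∪ {Z | Z ∈ mu ∧ Z ⊂ (X₂ : Set Ordinal)} ∪
          {(X₁ : Set Ordinal), (X₂ : Set Ordinal)})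
  covers : ⋃₀ mu = Set.Iio (Order.succ κ).ord
  neat : ∀ X : mu, (wf.apply X).rank ≠ 0 →
    (X : Set Ordinal) = ⋃₀ {Z | Z ∈ mu ∧ Z ⊂ (X : Set Ordinal)}

namespace TwoCardinal

variable {κ : Cardinal} (M : TwoCardinal κ)

set_option linter.deprecated false in
/-- The rank of an element of `μ` in the well-founded order `(μ, ⊂)`. -/
noncomputable def rank (X : M.mu) : Ordinal := olower ((M.wf.apply X).rank)

/-- The height of the well-founded order `(μ, ⊂)`. -/
noncomputable def ht : Ordinal := sSup (Set.range fun X : M.mu => M.rank X + 1)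

/-- The term `μ_ξ(α)` of the μ-sequence at `α`: equal to `X ∩ α` for any `X ∈ μ` of
rank `ξ` containing `α` (this is independent of the choice of `X`). -/
noncomputable def seq (α ξ : Ordinal) : Set Ordinal :=
  ⋃₀ {S | ∃ X : M.mu, M.rank X = ξ ∧ α ∈ (X : Set Ordinal) ∧
    S = (X : Set Ordinal) ∩ Set.Iio α}

/-- The μ-coloring `m(α,β) = min{rank X : α, β ∈ X ∈ μ}`. -/
noncomputable def mcol (a b : Ordinal) : Ordinal :=
  sInf {ξ | ∃ X : M.mu, M.rank X = ξ ∧ a ∈ (X : Set Ordinal) ∧ b ∈ (X : Set Ordinal)}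

end TwoCardinal

section OtpAux

open Ordinal

/-- The (large) order type of a set of ordinals. -/
noncomputable def ltp (A : Set Ordinal.{0}) : Ordinal.{1} :=
  Ordinal.type (Subrel ((· < ·) : Ordinal → Ordinal → Prop) (· ∈ A))

theorem ltp_Iio (o : Ordinal.{0}) : ltp (Set.Iio o) = Ordinal.lift.{1} o := by
  haveI iwo : IsWellOrder o.ToType ((· < ·) : o.ToType → o.ToType → Prop) := isWellOrder_lt
  have e : Subrel ((· < ·) : Ordinal → Ordinal → Prop) (· ∈ Set.Iio o) ≃r
      ((· < ·) : o.ToType → o.ToType → Prop) := by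
    refine ⟨(Ordinal.ToType.mk (o := o)).toEquiv, ?_⟩
    intro a b
    exact (Ordinal.ToType.mk (o := o)).lt_iff_lt.trans Subtype.coe_lt_coe.symm
  have h : Ordinal.lift.{0}
        (Ordinal.type (Subrel ((· < ·) : Ordinal → Ordinal → Prop) (· ∈ Set.Iio o))) =
      Ordinal.lift.{1} (Ordinal.type ((· < ·) : o.ToType → o.ToType → Prop)) :=
    e.ordinal_lift_type_eq
  rw [Ordinal.lift_uzero, Ordinal.type_toType] at h
  exact h

theorem ltp_mono {A B : Set Ordinal.{0}} (h : A ⊆ B) : ltp A ≤ ltp B := by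
  refine Ordinal.type_le_iff'.mpr ⟨⟨Set.embeddingOfSubset A B h, ?_⟩⟩
  intro a b
  rfl

theorem exists_lift_eq_ltp {A : Set Ordinal.{0}} {o : Ordinal} (h : A ⊆ Set.Iio o) :
    ∃ a : Ordinal.{0}, Ordinal.lift.{1} a = ltp A :=
  Ordinal.mem_range_lift_of_le (by rw [← ltp_Iio]; exact ltp_mono h)

theorem lift_otp {A : Set Ordinal.{0}} {o : Ordinal} (h : A ⊆ Set.Iio o) :
    Ordinal.lift.{1} (otp A) = ltp A :=
  csInf_mem (exists_lift_eq_ltp h)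

theorem ltp_inter_Iio {A : Set Ordinal.{0}} {a : Ordinal} (ha : a ∈ A) :
    ltp (A ∩ Set.Iio a) =
      Ordinal.typein (Subrel ((· < ·) : Ordinal → Ordinal → Prop) (· ∈ A)) ⟨a, ha⟩ := by
  rw [← Ordinal.type_subrel]
  refine Ordinal.type_eq.mpr ⟨?_⟩
  exact ⟨⟨fun x => ⟨⟨x.1, x.2.1⟩, x.2.2⟩, fun y => ⟨y.1.1, y.1.2, y.2⟩,
    fun x => rfl, fun y => rfl⟩, Iff.rfl⟩

theorem lift_otp_inter_Iio {A : Set Ordinal.{0}} {o a : Ordinal} (h : A ⊆ Set.Iio o)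
    (ha : a ∈ A) :
    Ordinal.lift.{1} (otp (A ∩ Set.Iio a)) =
      Ordinal.typein (Subrel ((· < ·) : Ordinal → Ordinal → Prop) (· ∈ A)) ⟨a, ha⟩ := by
  rw [lift_otp (Set.inter_subset_left.trans h)]
  exact ltp_inter_Iio ha

theorem pos_lt_pos {A : Set Ordinal.{0}} {o a b : Ordinal} (h : A ⊆ Set.Iio o)
    (ha : a ∈ A) (hb : b ∈ A) (hab : a < b) :
    otp (A ∩ Set.Iio a) < otp (A ∩ Set.Iio b) := by
  have h2 := (Ordinal.typein_lt_typein
    (Subrel ((· < ·) : Ordinal → Ordinal → Prop) (· ∈ A))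
    (a := ⟨a, ha⟩) (b := ⟨b, hb⟩)).mpr hab
  rw [← lift_otp_inter_Iio h ha, ← lift_otp_inter_Iio h hb] at h2
  exact Ordinal.lift_lt.mp h2

theorem pos_injOn {A : Set Ordinal.{0}} {o a b : Ordinal} (h : A ⊆ Set.Iio o)
    (ha : a ∈ A) (hb : b ∈ A) (heq : otp (A ∩ Set.Iio a) = otp (A ∩ Set.Iio b)) : a = b := by
  rcases lt_trichotomy a b with h1 | h1 | h1
  · exact absurd heq (pos_lt_pos h ha hb h1).ne
  · exact h1
  · exact absurd heq.symm (pos_lt_pos h hb ha h1).ne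

theorem pos_lt_otp {A : Set Ordinal.{0}} {o a : Ordinal} (h : A ⊆ Set.Iio o) (ha : a ∈ A) :
    otp (A ∩ Set.Iio a) < otp A := by
  have h2 := Ordinal.typein_lt_type
    (Subrel ((· < ·) : Ordinal → Ordinal → Prop) (· ∈ A)) ⟨a, ha⟩
  rw [← lift_otp_inter_Iio h ha,
    show Ordinal.type (Subrel ((· < ·) : Ordinal → Ordinal → Prop) (· ∈ A)) = ltp A from rfl,
    ← lift_otp h] at h2
  exact Ordinal.lift_lt.mp h2

theorem pos_surj {A : Set Ordinal.{0}} {o p : Ordinal} (h : A ⊆ Set.Iio o)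
    (hp : p < otp A) : ∃ a, ∃ ha : a ∈ A, otp (A ∩ Set.Iio a) = p := by
  have h1 : Ordinal.lift.{1} p < ltp A := by
    rw [← lift_otp h]; exact Ordinal.lift_lt.mpr hp
  obtain ⟨⟨a, ha⟩, hx⟩ := Ordinal.typein_surj _ h1
  refine ⟨a, ha, ?_⟩
  have h2 := lift_otp_inter_Iio h ha
  rw [hx] at h2
  exact Ordinal.lift_inj.mp h2

theorem mk_eq_otp {A : Set Ordinal.{0}} {o : Ordinal} (h : A ⊆ Set.Iio o) :
    #↥A = Cardinal.lift.{1} (otp A).card := by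
  rw [← Ordinal.card_type (Subrel ((· < ·) : Ordinal → Ordinal → Prop) (· ∈ A)),
    show Ordinal.type (Subrel ((· < ·) : Ordinal → Ordinal → Prop) (· ∈ A)) = ltp A from rfl,
    ← lift_otp h, ← Ordinal.lift_card]

theorem omap_spec {X Y : Set Ordinal.{0}} {o : Ordinal} (hX : X ⊆ Set.Iio o)
    (hY : Y ⊆ Set.Iio o) (hotp : otp X = otp Y) {a : Ordinal} (ha : a ∈ X) :
    omap X Y a ∈ Y ∧ otp (Y ∩ Set.Iio (omap X Y a)) = otp (X ∩ Set.Iio a) := by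
  have h1 : otp (X ∩ Set.Iio a) < otp Y := hotp ▸ pos_lt_otp hX ha
  obtain ⟨b, hb, hpos⟩ := pos_surj hY h1
  exact csInf_mem (⟨b, hb, hpos⟩ :
    Set.Nonempty {b' | b' ∈ Y ∧ otp (Y ∩ Set.Iio b') = otp (X ∩ Set.Iio a)})

theorem omap_transfer {o : Ordinal} {Z₁ Z₂ : Set Ordinal.{0}} (h1 : Z₁ ⊆ Set.Iio o)
    (h2 : Z₂ ⊆ Set.Iio o) (hotp : otp Z₁ = otp Z₂)
    (hcom : ∀ γ ∈ Z₁ ∩ Z₂, Z₁ ∩ Set.Iio γ = Z₂ ∩ Set.Iio γ)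
    {Y' : Set Ordinal} (hY' : Y' ⊆ Z₁) {α : Ordinal} (hα₁ : α ∈ Z₁) (hα₂ : α ∈ Z₂)
    (hαY : α ∈ omap Z₁ Z₂ '' Y') :
    α ∈ Y' ∧ omap Z₁ Z₂ '' Y' ∩ Set.Iio α = Y' ∩ Set.Iio α := by
  have hfix : ∀ γ ∈ Z₁ ∩ Z₂, ∀ a ∈ Z₁, omap Z₁ Z₂ a = γ → a = γ := by
    intro γ hγ a ha heq
    obtain ⟨hmem, hpos⟩ := omap_spec h1 h2 hotp ha
    rw [heq, ← hcom γ hγ] at hpos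
    exact pos_injOn h1 ha hγ.1 hpos.symm
  have hfix2 : ∀ γ ∈ Z₁ ∩ Z₂, omap Z₁ Z₂ γ = γ := by
    intro γ hγ
    obtain ⟨hmem, hpos⟩ := omap_spec h1 h2 hotp hγ.1
    have h3 : otp (Z₂ ∩ Set.Iio γ) = otp (Z₁ ∩ Set.Iio γ) := by rw [hcom γ hγ]
    exact pos_injOn h2 hmem hγ.2 (hpos.trans h3.symm)
  constructor
  · obtain ⟨a, haY', hae⟩ := hαY
    have h4 := hfix α ⟨hα₁, hα₂⟩ a (hY' haY') hae
    rwa [h4] at haY'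
  · ext x
    constructor
    · rintro ⟨⟨a, haY', hae⟩, hxlt⟩
      have hx2 : x ∈ Z₂ := hae ▸ (omap_spec h1 h2 hotp (hY' haY')).1
      have hx12 : x ∈ Z₁ ∩ Z₂ := by
        have h5 : x ∈ Z₂ ∩ Set.Iio α := ⟨hx2, hxlt⟩
        rw [← hcom α ⟨hα₁, hα₂⟩] at h5
        exact ⟨h5.1, hx2⟩
      have h6 := hfix x hx12 a (hY' haY') hae
      exact ⟨h6 ▸ haY', hxlt⟩
    · rintro ⟨hxY', hxlt⟩
      have hx1 : x ∈ Z₁ := hY' hxY'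
      have hx12 : x ∈ Z₁ ∩ Z₂ := by
        have h5 : x ∈ Z₁ ∩ Set.Iio α := ⟨hx1, hxlt⟩
        rw [hcom α ⟨hα₁, hα₂⟩] at h5
        exact ⟨hx1, h5.1⟩
      exact ⟨⟨x, hxY', hfix2 x hx12⟩, hxlt⟩

set_option linter.deprecated false in
/-- Comparability of traces: if `X, Y ∈ μ` are both contained in some `Z ∈ μ` and
`α ∈ X ∩ Y`, then `X ∩ Iio α ⊆ Y` or `Y ∩ Iio α ⊆ X`. -/
theorem morass_comp {κ : Cardinal} (M : TwoCardinal κ) (Z : M.mu) :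
    ∀ X Y : Set Ordinal, X ∈ M.mu → Y ∈ M.mu → X ⊆ (Z : Set Ordinal) →
      Y ⊆ (Z : Set Ordinal) → ∀ α, α ∈ X → α ∈ Y →
      X ∩ Set.Iio α ⊆ Y ∨ Y ∩ Set.Iio α ⊆ X := by
  have hbnd : ∀ W ∈ M.mu, W ⊆ Set.Iio (Order.succ κ).ord := M.mem_sub
  induction Z using M.wf.induction with
  | _ Z IH =>
  intro X Y hXm hYm hXZ hYZ α hαX hαY
  rcases eq_or_ne X (Z : Set Ordinal) with hXeq | hXne
  · right; intro x hx; rw [hXeq]; exact hYZ hx.1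
  rcases eq_or_ne Y (Z : Set Ordinal) with hYeq | hYne
  · left; intro x hx; rw [hYeq]; exact hXZ hx.1
  have hXss : X ⊂ (Z : Set Ordinal) := hXZ.ssubset_of_ne hXne
  have hYss : Y ⊂ (Z : Set Ordinal) := hYZ.ssubset_of_ne hYne
  have key : ∀ (W₁ W₂ : M.mu), (W₁ : Set Ordinal) ⊂ (Z : Set Ordinal) →
      (W₂ : Set Ordinal) ⊂ (Z : Set Ordinal) → (M.wf.apply W₁).rank = (M.wf.apply W₂).rank →
      (∀ γ ∈ (W₁ : Set Ordinal) ∩ (W₂ : Set Ordinal),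
        (W₁ : Set Ordinal) ∩ Set.Iio γ = (W₂ : Set Ordinal) ∩ Set.Iio γ) →
      ∀ X Y : Set Ordinal, X ∈ M.mu → Y ∈ M.mu → X ⊆ (W₁ : Set Ordinal) →
        Y ⊆ (W₂ : Set Ordinal) → ∀ α, α ∈ X → α ∈ Y →
        X ∩ Set.Iio α ⊆ Y ∨ Y ∩ Set.Iio α ⊆ X := by
    intro W₁ W₂ hW₁ hW₂ hrank hcom X Y hXm hYm hXW hYW α hαX hαY
    have hα₁ : α ∈ (W₁ : Set Ordinal) := hXW hαX
    have hα₂ : α ∈ (W₂ : Set Ordinal) := hYW hαY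
    have hcomα := hcom α ⟨hα₁, hα₂⟩
    rcases eq_or_ne Y (W₂ : Set Ordinal) with hYeq | hYne2
    · left
      intro x hx
      have h5 : x ∈ (W₁ : Set Ordinal) ∩ Set.Iio α := ⟨hXW hx.1, hx.2⟩
      rw [hcomα] at h5
      rw [hYeq]
      exact h5.1
    have hYss2 : Y ⊂ (W₂ : Set Ordinal) := hYW.ssubset_of_ne hYne2
    have hhom := M.homog W₁ W₂ hrank
    have hYmem : Y ∈ {W | W ∈ M.mu ∧ W ⊂ (W₂ : Set Ordinal)} := ⟨hYm, hYss2⟩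
    rw [hhom.2] at hYmem
    obtain ⟨Y', ⟨hY'm, hY'ss⟩, hYimg0⟩ := hYmem
    have hYimg : omap (W₁ : Set Ordinal) (W₂ : Set Ordinal) '' Y' = Y := hYimg0
    obtain ⟨hαY', hseteq⟩ := omap_transfer (hbnd _ W₁.2) (hbnd _ W₂.2) hhom.1 hcom
      hY'ss.subset hα₁ hα₂ (by rw [hYimg]; exact hαY)
    rw [hYimg] at hseteq
    rcases IH W₁ hW₁ X Y' hXm hY'm hXW hY'ss.subset α hαX hαY' with h | h
    · left
      intro x hx
      have h5 : x ∈ Y' ∩ Set.Iio α := ⟨h ⟨hx.1, hx.2⟩, hx.2⟩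
      rw [← hseteq] at h5
      exact h5.1
    · right
      intro x hx
      have h5 : x ∈ Y ∩ Set.Iio α := hx
      rw [hseteq] at h5
      exact h h5
  rcases M.locAlmostDirected Z with hdir | ⟨Z₁, Z₂, hrank, hstar, hpred⟩
  · obtain ⟨W, hWm, hWss, hXW, hYW⟩ := hdir X hXm Y hYm hXss hYss
    exact IH ⟨W, hWm⟩ hWss X Y hXm hYm hXW hYW α hαX hαY
  · obtain ⟨hotp12, hZeq, hlt1, hlt2⟩ := hstar
    have hZ₁ss : (Z₁ : Set Ordinal) ⊂ (Z : Set Ordinal) := by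
      have h5 : (Z₁ : Set Ordinal) ∈ {W | W ∈ M.mu ∧ W ⊂ (Z : Set Ordinal)} := by
        rw [hpred]
        exact Set.mem_union_right _ (Set.mem_insert _ _)
      exact h5.2
    have hZ₂ss : (Z₂ : Set Ordinal) ⊂ (Z : Set Ordinal) := by
      have h5 : (Z₂ : Set Ordinal) ∈ {W | W ∈ M.mu ∧ W ⊂ (Z : Set Ordinal)} := by
        rw [hpred]
        exact Set.mem_union_right _ (Set.mem_insert_of_mem _ rfl)
      exact h5.2
    have hd₁ : ((Z₁ : Set Ordinal) \ (Z₂ : Set Ordinal)).Nonempty := by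
      rw [Set.nonempty_iff_ne_empty]
      intro h
      have h5 : (Z₁ : Set Ordinal) ⊆ (Z₂ : Set Ordinal) := Set.diff_eq_empty.mp h
      have h6 : (Z : Set Ordinal) = (Z₂ : Set Ordinal) := by
        rw [hZeq, Set.union_eq_right.mpr h5]
      rw [h6] at hZ₂ss
      exact ssubset_irrefl _ hZ₂ss
    have hcom : ∀ γ ∈ (Z₁ : Set Ordinal) ∩ (Z₂ : Set Ordinal),
        (Z₁ : Set Ordinal) ∩ Set.Iio γ = (Z₂ : Set Ordinal) ∩ Set.Iio γ := by
      intro γ hγ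
      ext x
      constructor
      · rintro ⟨hx1, hxlt⟩
        refine ⟨?_, hxlt⟩
        by_contra hx2
        exact lt_asymm hxlt (hlt1 γ hγ x ⟨hx1, hx2⟩)
      · rintro ⟨hx2, hxlt⟩
        refine ⟨?_, hxlt⟩
        by_contra hx1
        obtain ⟨b, hb⟩ := hd₁
        exact lt_asymm hxlt ((hlt1 γ hγ b hb).trans (hlt2 b hb x ⟨hx2, hx1⟩))
    have hsub : ∀ W, W ∈ M.mu → W ⊂ (Z : Set Ordinal) →
        W ⊆ (Z₁ : Set Ordinal) ∨ W ⊆ (Z₂ : Set Ordinal) := by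
      intro W hWm hWss
      have h5 : W ∈ {W | W ∈ M.mu ∧ W ⊂ (Z : Set Ordinal)} := ⟨hWm, hWss⟩
      rw [hpred] at h5
      rcases h5 with (h5 | h5) | h5
      · exact Or.inl h5.2.subset
      · exact Or.inr h5.2.subset
      · rcases h5 with h5 | h5
        · exact Or.inl (le_of_eq h5)
        · exact Or.inr (le_of_eq h5)
    rcases hsub X hXm hXss with hX1 | hX2
    · rcases hsub Y hYm hYss with hY1 | hY2
      · exact IH Z₁ hZ₁ss X Y hXm hYm hX1 hY1 α hαX hαY
      · exact key Z₁ Z₂ hZ₁ss hZ₂ss hrank hcom X Y hXm hYm hX1 hY2 α hαX hαY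
    · rcases hsub Y hYm hYss with hY1 | hY2
      · exact key Z₂ Z₁ hZ₂ss hZ₁ss hrank.symm
          (fun γ hγ => (hcom γ ⟨hγ.2, hγ.1⟩).symm) X Y hXm hYm hX2 hY1 α hαX hαY
      · exact IH Z₂ hZ₂ss X Y hXm hYm hX2 hY2 α hαX hαY

end OtpAux

/-- A `(κ,κ⁺)`-cardinal is cofinal in `(℘_κ(κ⁺), ⊆)`. -/
theorem cofinal_in_P_kappa (κ : Cardinal) (hκ : κ.IsRegular) (M : TwoCardinal κ)
    (s : Set Ordinal) (hs : s ⊆ Set.Iio (Order.succ κ).ord) (hcard : (otp s).card < κ) :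
    ∃ X : M.mu, s ⊆ (X : Set Ordinal) := by
  classical
  set o := (Order.succ κ).ord with ho
  have hbnd : ∀ W ∈ M.mu, W ⊆ Set.Iio o := M.mem_sub
  have hreg' : (Order.succ κ).IsRegular := Cardinal.isRegular_succ hκ.aleph0_le
  have hcof : o.cof = Order.succ κ := hreg'.cof_eq
  have hcov2 : ∀ γ δ : Ordinal, γ < o → δ < o → ∃ W ∈ M.mu, γ ∈ W ∧ δ ∈ W := by
    intro γ δ h1 h2
    have hγ : γ ∈ ⋃₀ M.mu := by rw [M.covers]; exact h1
    have hδ : δ ∈ ⋃₀ M.mu := by rw [M.covers]; exact h2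
    obtain ⟨A, hA, hγA⟩ := hγ
    obtain ⟨B, hB, hδB⟩ := hδ
    obtain ⟨W, hW, hAW, hBW⟩ := M.directed A hA B hB
    exact ⟨W, hW, hAW hγA, hBW hδB⟩
  haveI hsmallIio : Small.{0} ↥(Set.Iio o) :=
    ⟨⟨o.ToType, ⟨(Ordinal.ToType.mk (o := o)).toEquiv⟩⟩⟩
  haveI hsmall : Small.{0} ↥s := small_subset hs
  set es := equivShrink ↥s with hes
  have hmks : #↥s ≤ Cardinal.lift.{1} (otp s).card := by
    have hinj : Function.Injective
        (fun a : ↥s => (⟨otp (s ∩ Set.Iio a.1), pos_lt_otp hs a.2⟩ :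
          ↥(Set.Iio (otp s)))) := by
      intro a b hab
      exact Subtype.ext (pos_injOn hs a.2 b.2 (congrArg Subtype.val hab))
    calc #↥s ≤ #↥(Set.Iio (otp s)) := Cardinal.mk_le_of_injective hinj
      _ = Cardinal.lift.{1} (otp s).card := Ordinal.mk_Iio_ordinal _
  have hmkι : #(Shrink ↥s) < κ := by
    have h1 : Cardinal.lift.{1} #(Shrink ↥s) = #↥s := by
      have := Cardinal.lift_mk_eq'.mpr ⟨es.symm⟩
      rwa [Cardinal.lift_uzero] at this
    have h2 : Cardinal.lift.{1} #(Shrink ↥s) < Cardinal.lift.{1} κ := by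
      rw [h1]
      exact hmks.trans_lt (Cardinal.lift_lt.mpr hcard)
    exact Cardinal.lift_lt.mp h2
  set f : Shrink ↥s → Ordinal := fun i => Order.succ ((es.symm i : ↥s) : Ordinal) with hf
  have hlimo : Order.IsSuccLimit o := Cardinal.isSuccLimit_ord (hκ.aleph0_le.trans (Order.le_succ κ))
  have hflt : ∀ i, f i < o := fun i => hlimo.succ_lt (hs (es.symm i).2)
  have hsup : iSup f < o := by
    refine Ordinal.iSup_lt_ord ?_ hflt
    rw [hcof]
    exact hmkι.trans (Order.lt_succ κ)
  set α := max κ.ord (iSup f) with hα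
  have hαo : α < o := by
    refine max_lt ?_ hsup
    rw [ho]
    exact Cardinal.ord_lt_ord.mpr (Order.lt_succ κ)
  have hsα : ∀ a ∈ s, a < α := by
    intro a haa
    have h1 : f (es ⟨a, haa⟩) ≤ iSup f := Ordinal.le_iSup f (es ⟨a, haa⟩)
    have h2 : f (es ⟨a, haa⟩) = Order.succ a := by
      rw [hf]
      simp
    rw [h2] at h1
    exact lt_of_lt_of_le (Order.lt_succ a) (h1.trans (le_max_right _ _))
  have hκα : κ ≤ α.card := by
    have h1 := Ordinal.card_le_card (le_max_left κ.ord (iSup f))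
    rwa [Cardinal.card_ord] at h1
  have hchoice : ∀ a : ↥s, ∃ W, W ∈ M.mu ∧ α ∈ W ∧ (a : Ordinal) ∈ W := by
    intro a
    obtain ⟨W, h1, h2, h3⟩ := hcov2 α a hαo (hs a.2)
    exact ⟨W, h1, h2, h3⟩
  choose T hTm hTα hTa using hchoice
  set e := Ordinal.ToType.mk (o := α) with he
  set T' : Shrink ↥s → Set α.ToType :=
    fun i => {t | ((e.symm t : ↥(Set.Iio α)) : Ordinal) ∈ T (es.symm i)} with hT'
  have hT'small : ∀ i, #↥(T' i) < κ := by
    intro i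
    have hinj : Function.Injective
        (fun t : ↥(T' i) => (⟨((e.symm t.1 : ↥(Set.Iio α)) : Ordinal), t.2⟩ :
          ↥(T (es.symm i)))) := by
      intro t u htu
      simp only [Subtype.mk.injEq] at htu
      exact Subtype.ext (e.symm.injective (Subtype.ext htu))
    have h1 : Cardinal.lift.{1} #↥(T' i) ≤ #↥(T (es.symm i)) := by
      have h2 := Cardinal.lift_mk_le'.mpr ⟨⟨_, hinj⟩⟩
      rwa [Cardinal.lift_uzero] at h2
    have h2 : #↥(T (es.symm i)) < Cardinal.lift.{1} κ := by
      rw [mk_eq_otp (hbnd _ (hTm _))]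
      exact Cardinal.lift_lt.mpr (M.mem_small _ (hTm _))
    exact Cardinal.lift_lt.mp (h1.trans_lt h2)
  have hU : #↥(⋃ i, T' i) < κ :=
    calc #↥(⋃ i, T' i) ≤ Cardinal.sum (fun i => #↥(T' i)) := Cardinal.mk_iUnion_le_sum_mk
      _ < κ := Cardinal.sum_lt_of_isRegular hκ hmkι hT'small
  obtain ⟨t, ht⟩ : ∃ t, t ∉ ⋃ i, T' i := by
    by_contra h
    push_neg at h
    have h1 : (⋃ i, T' i) = Set.univ := Set.eq_univ_of_forall h
    have h2 : κ ≤ #↥(⋃ i, T' i) := by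
      rw [h1, Cardinal.mk_univ, Cardinal.mk_toType]
      exact hκα
    exact absurd hU (not_lt.mpr h2)
  set γ : Ordinal := ((e.symm t : ↥(Set.Iio α)) : Ordinal) with hγdef
  have hγα : γ < α := (e.symm t).2
  have hγT : ∀ a : ↥s, γ ∉ T a := by
    intro a hga
    refine ht (Set.mem_iUnion.mpr ⟨es a, ?_⟩)
    show ((e.symm t : ↥(Set.Iio α)) : Ordinal) ∈ T (es.symm (es a))
    rwa [Equiv.symm_apply_apply]
  obtain ⟨W, hWm, hαW, hγW⟩ := hcov2 α γ hαo (hγα.trans hαo)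
  refine ⟨⟨W, hWm⟩, ?_⟩
  intro a haa
  obtain ⟨V, hVm, hTV, hWV⟩ := M.directed (T ⟨a, haa⟩) (hTm _) W hWm
  rcases morass_comp M ⟨V, hVm⟩ (T ⟨a, haa⟩) W (hTm _) hWm hTV hWV α (hTα _) hαW with h | h
  · exact h ⟨hTa ⟨a, haa⟩, hsα a haa⟩
  · exact absurd (h ⟨hγW, hγα⟩) (hγT ⟨a, haa⟩)
end
end

section
/- Let κ be a regular cardinal. If there exists a (κ,κ⁺)-cardinal μ, then the family T = {f_α ↾ ξ : α < κ⁺, ξ < κ}, where f_α : κ → κ is defined by f_α(ξ) = order type of μ_ξ(α), ordered by end-extension, is a κ-Kurepa tree: a subtree of κ^{<κ} of height κ with all levels of size < κ and at least κ⁺ many branches of length κ. -/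
open Set Cardinal Ordinal

noncomputable section

set_option linter.deprecated false
set_option linter.unusedSectionVars false
set_option linter.unusedVariables false
set_option maxHeartbeats 1000000


/-- compatibility: rank in a well-founded relation. -/
noncomputable abbrev WellFounded.rank {α : Type*} {r : α → α → Prop} (hwf : WellFounded r)
    (a : α) : Ordinal := (hwf.apply a).rank

theorem WellFounded.rank_eq {α : Type*} {r : α → α → Prop} (hwf : WellFounded r) (a : α) :
    hwf.rank a = ⨆ b : { b // r b a }, Order.succ (hwf.rank b) :=
  (hwf.apply a).rank_eq

theorem WellFounded.rank_lt_of_rel {α : Type*} {r : α → α → Prop} (hwf : WellFounded r)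
    {a b : α} (h : r a b) : hwf.rank a < hwf.rank b :=
  Acc.rank_lt_of_rel _ h

namespace KurepaAux


/-- The raw (universe 1) order type of a set of ordinals. -/
def tA (A : Set Ordinal.{0}) : Ordinal.{1} :=
  Ordinal.type (Subrel ((· < ·) : Ordinal → Ordinal → Prop) (· ∈ A))

theorem olower_eq {a : Ordinal.{0}} {o : Ordinal.{1}} (h : Ordinal.lift.{1} a = o) :
    olower o = a := by
  have : {b : Ordinal.{0} | Ordinal.lift.{1} b = o} = {a} := by
    ext b
    simp only [mem_setOf_eq, mem_singleton_iff]
    constructor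
    · intro hb; exact Ordinal.lift_inj.1 (hb.trans h.symm)
    · rintro rfl; exact h
  rw [olower, this, csInf_singleton]

theorem tA_mono {A B : Set Ordinal.{0}} (h : A ⊆ B) : tA A ≤ tA B := by
  refine RelEmbedding.ordinal_type_le ?_
  exact RelEmbedding.codRestrict B
    (Subrel.relEmbedding ((· < ·) : Ordinal → Ordinal → Prop) A) (fun a => h a.2)

theorem tA_Iio (o : Ordinal.{0}) : tA (Set.Iio o) = Ordinal.lift.{1} o := by
  have := Ordinal.type_subrel ((· < ·) : Ordinal → Ordinal → Prop) o
  rw [tA]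
  have h2 : (Set.Iio o) = {b : Ordinal | b < o} := rfl
  rw [h2]; exact this.trans (typein_ordinal o)

theorem lift_otp {A : Set Ordinal.{0}} {o : Ordinal.{0}} (hA : A ⊆ Set.Iio o) :
    Ordinal.lift.{1} (otp A) = tA A := by
  have h1 : tA A ≤ Ordinal.lift.{1} o := (tA_mono hA).trans_eq (tA_Iio o)
  obtain ⟨a, ha⟩ := Ordinal.mem_range_lift_of_le h1
  have h2 : otp A = a := olower_eq ha
  rw [h2]; exact ha

/-- bounded sets -/
def Bdd (A : Set Ordinal.{0}) : Prop := ∃ o, A ⊆ Set.Iio o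

theorem bdd_subset {A B : Set Ordinal.{0}} (h : A ⊆ B) (hB : Bdd B) : Bdd A :=
  ⟨hB.choose, h.trans hB.choose_spec⟩

theorem lift_otp' {A : Set Ordinal.{0}} (hA : Bdd A) :
    Ordinal.lift.{1} (otp A) = tA A := lift_otp hA.choose_spec

theorem otp_mono {A B : Set Ordinal.{0}} (hB : Bdd B) (h : A ⊆ B) : otp A ≤ otp B := by
  rw [← Ordinal.lift_le.{1}, lift_otp' (bdd_subset h hB), lift_otp' hB]
  exact tA_mono h

theorem otp_empty : otp (∅ : Set Ordinal.{0}) = 0 := by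
  have : tA (∅ : Set Ordinal.{0}) = 0 := by
    rw [tA, Ordinal.type_eq_zero_iff_isEmpty]
    exact ⟨fun x => x.2⟩
  have h2 : otp (∅ : Set Ordinal.{0}) = olower (tA ∅) := rfl
  rw [h2, this]
  exact olower_eq (by simp)

theorem mk_eq_lift_otp {A : Set Ordinal.{0}} (hA : Bdd A) :
    Cardinal.mk A = Cardinal.lift.{1} (otp A).card := by
  have h1 : (tA A).card = #A := Ordinal.card_type _
  rw [← h1, ← lift_otp' hA, ← Ordinal.lift_card]

-- iso lemma
theorem tA_eq_of_iso {A B : Set Ordinal.{0}} (e : A ≃ B)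
    (he : ∀ x y : A, (x : Ordinal) < (y : Ordinal) ↔ ((e x : Ordinal) < (e y : Ordinal))) :
    tA A = tA B := by
  refine (Ordinal.type_eq.2 ⟨RelIso.mk e ?_⟩)
  intro a b
  exact (he a b).symm

theorem otp_eq_of_iso {A B : Set Ordinal.{0}} (hA : Bdd A) (hB : Bdd B) (e : A ≃ B)
    (he : ∀ x y : A, (x : Ordinal) < (y : Ordinal) ↔ ((e x : Ordinal) < (e y : Ordinal))) :
    otp A = otp B := by
  rw [← Ordinal.lift_inj.{1}, lift_otp' hA, lift_otp' hB]
  exact tA_eq_of_iso e he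

/-- the position of `a` in `A`, as the typein of the subrel. -/
theorem lift_pos {A : Set Ordinal.{0}} {a : Ordinal} (ha : a ∈ A) (hA : Bdd A) :
    Ordinal.lift.{1} (otp (A ∩ Set.Iio a)) =
      Ordinal.typein (Subrel ((· < ·) : Ordinal → Ordinal → Prop) (· ∈ A)) ⟨a, ha⟩ := by
  rw [lift_otp' (bdd_subset inter_subset_left hA)]
  rw [← Ordinal.type_subrel]
  refine (Ordinal.type_eq.2 ⟨RelIso.mk (Equiv.mk ?_ ?_ ?_ ?_) ?_⟩).symm
  · rintro ⟨⟨x, hxA⟩, hlt⟩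
    exact ⟨x, hxA, hlt⟩
  · rintro ⟨x, hxA, hlt⟩
    exact ⟨⟨x, hxA⟩, hlt⟩
  · rintro ⟨⟨x, hxA⟩, hlt⟩; rfl
  · rintro ⟨x, hxA, hlt⟩; rfl
  · rintro ⟨⟨x, hxA⟩, hx⟩ ⟨⟨y, hyA⟩, hy⟩
    rfl

theorem pos_lt_otp {A : Set Ordinal.{0}} {a : Ordinal} (ha : a ∈ A) (hA : Bdd A) :
    otp (A ∩ Set.Iio a) < otp A := by
  rw [← Ordinal.lift_lt.{1}, lift_pos ha hA, lift_otp' hA]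
  exact Ordinal.typein_lt_type _ _

theorem pos_surj {A : Set Ordinal.{0}} (hA : Bdd A) {p : Ordinal}
    (hp : p < otp A) : ∃ a, ∃ (ha : a ∈ A), otp (A ∩ Set.Iio a) = p := by
  have h1 : Ordinal.lift.{1} p < tA A := by
    rw [← lift_otp' hA]; exact Ordinal.lift_lt.2 hp
  obtain ⟨⟨a, haA⟩, ha⟩ := Ordinal.typein_surj _ h1
  refine ⟨a, haA, ?_⟩
  rw [← Ordinal.lift_inj.{1}, lift_pos haA hA, ha]

theorem pos_lt_pos {A : Set Ordinal.{0}} {a b : Ordinal} (ha : a ∈ A) (hb : b ∈ A)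
    (hA : Bdd A) (hab : a < b) :
    otp (A ∩ Set.Iio a) < otp (A ∩ Set.Iio b) := by
  rw [← Ordinal.lift_lt.{1}, lift_pos ha hA, lift_pos hb hA]
  exact (Ordinal.typein_lt_typein _).2 hab

theorem pos_injOn {A : Set Ordinal.{0}} {a b : Ordinal} (ha : a ∈ A) (hb : b ∈ A)
    (hA : Bdd A) (h : otp (A ∩ Set.Iio a) = otp (A ∩ Set.Iio b)) : a = b := by
  rcases lt_trichotomy a b with h1 | h1 | h1
  · exact absurd h (pos_lt_pos ha hb hA h1).ne
  · exact h1
  · exact absurd h.symm (pos_lt_pos hb ha hA h1).ne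

theorem otp_image {S : Set Ordinal.{0}} {X : Set Ordinal.{0}} (hSX : S ⊆ X)
    (f : Ordinal → Ordinal)
    (hf : ∀ a ∈ X, ∀ b ∈ X, a < b → f a < f b)
    (hS : Bdd S) (hfS : Bdd (f '' S)) :
    otp (f '' S) = otp S := by
  have hinj : Set.InjOn f S := by
    intro a haS b hbS hab
    rcases lt_trichotomy a b with h1 | h1 | h1
    · exact absurd hab (hf a (hSX haS) b (hSX hbS) h1).ne
    · exact h1
    · exact absurd hab.symm (hf b (hSX hbS) a (hSX haS) h1).ne
  refine (otp_eq_of_iso hS hfS (Equiv.Set.imageOfInjOn f S hinj) ?_).symm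
  rintro ⟨x, hx⟩ ⟨y, hy⟩
  constructor
  · intro h; exact hf x (hSX hx) y (hSX hy) h
  · intro h
    rcases lt_trichotomy x y with h1 | h1 | h1
    · exact h1
    · subst h1; exact absurd h (lt_irrefl _)
    · exact absurd h (asymm (hf y (hSX hy) x (hSX hx) h1))
section Omap
variable {X Y : Set Ordinal.{0}} (hX : Bdd X) (hY : Bdd Y) (hotp : otp X = otp Y)

include hX hY hotp in
theorem omap_spec {a : Ordinal} (ha : a ∈ X) :
    omap X Y a ∈ Y ∧ otp (Y ∩ Set.Iio (omap X Y a)) = otp (X ∩ Set.Iio a) := by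
  have h1 : otp (X ∩ Set.Iio a) < otp Y := hotp ▸ pos_lt_otp ha hX
  obtain ⟨b, hb, hb2⟩ := pos_surj hY h1
  have hne : {b | b ∈ Y ∧ otp (Y ∩ Set.Iio b) = otp (X ∩ Set.Iio a)}.Nonempty :=
    ⟨b, hb, hb2⟩
  exact csInf_mem hne

include hY in
theorem omap_eq {a b : Ordinal} (hb : b ∈ Y)
    (h : otp (Y ∩ Set.Iio b) = otp (X ∩ Set.Iio a)) : omap X Y a = b := by
  have : {c | c ∈ Y ∧ otp (Y ∩ Set.Iio c) = otp (X ∩ Set.Iio a)} = {b} := by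
    ext c
    simp only [mem_setOf_eq, mem_singleton_iff]
    constructor
    · rintro ⟨hc, hc2⟩
      exact pos_injOn hc hb hY (hc2.trans h.symm)
    · rintro rfl; exact ⟨hb, h⟩
  rw [omap, this, csInf_singleton]

include hX hY hotp in
theorem omap_mem {a : Ordinal} (ha : a ∈ X) : omap X Y a ∈ Y :=
  (omap_spec hX hY hotp ha).1

include hX hY hotp in
theorem omap_lt_omap {a b : Ordinal} (ha : a ∈ X) (hb : b ∈ X) (hab : a < b) :
    omap X Y a < omap X Y b := by
  have h1 := (omap_spec hX hY hotp ha).2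
  have h2 := (omap_spec hX hY hotp hb).2
  have h3 : otp (Y ∩ Set.Iio (omap X Y a)) < otp (Y ∩ Set.Iio (omap X Y b)) := by
    rw [h1, h2]; exact pos_lt_pos ha hb hX hab
  by_contra h4
  rcases eq_or_lt_of_le (not_lt.1 h4) with h5 | h5
  · rw [h5] at h3; exact absurd h3 (lt_irrefl _)
  · exact absurd h3 (asymm (pos_lt_pos (omap_mem hX hY hotp hb) (omap_mem hX hY hotp ha) hY h5))

include hX hY hotp in
theorem omap_injOn {a b : Ordinal} (ha : a ∈ X) (hb : b ∈ X)
    (h : omap X Y a = omap X Y b) : a = b := by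
  rcases lt_trichotomy a b with h1 | h1 | h1
  · exact absurd h (omap_lt_omap hX hY hotp ha hb h1).ne
  · exact h1
  · exact absurd h.symm (omap_lt_omap hX hY hotp hb ha h1).ne

include hX hY hotp in
theorem omap_image_eq : omap X Y '' X = Y := by
  apply Set.eq_of_subset_of_subset
  · rintro b ⟨a, ha, rfl⟩; exact omap_mem hX hY hotp ha
  · intro b hb
    have h1 : otp (Y ∩ Set.Iio b) < otp X := hotp ▸ pos_lt_otp hb hY
    obtain ⟨a, ha, ha2⟩ := pos_surj hX h1
    exact ⟨a, ha, omap_eq hY hb ha2.symm⟩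

include hX hY in
theorem omap_fix {a : Ordinal} (ha : a ∈ X) (ha' : a ∈ Y)
    (h : X ∩ Set.Iio a = Y ∩ Set.Iio a) : omap X Y a = a :=
  omap_eq hY ha' (by rw [h])

include hX hY hotp in
theorem omap_image_inter {S : Set Ordinal} (hS : S ⊆ X) {a : Ordinal} (ha : a ∈ X) :
    omap X Y '' (S ∩ Set.Iio a) = (omap X Y '' S) ∩ Set.Iio (omap X Y a) := by
  apply Set.eq_of_subset_of_subset
  · rintro b ⟨s, ⟨hsS, hslt⟩, rfl⟩
    exact ⟨⟨s, hsS, rfl⟩, omap_lt_omap hX hY hotp (hS hsS) ha hslt⟩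
  · rintro b ⟨⟨s, hsS, rfl⟩, hlt⟩
    refine ⟨s, ⟨hsS, ?_⟩, rfl⟩
    by_contra h4
    exact absurd hlt (not_lt.2 (le_of_eq_or_lt
      ((not_lt.1 h4).eq_or_lt.imp (fun h => by rw [h]) (omap_lt_omap hX hY hotp ha (hS hsS)))))

include hX hY hotp in
theorem omap_otp_image {S : Set Ordinal} (hS : S ⊆ X) :
    otp (omap X Y '' S) = otp S :=
  otp_image hS _ (fun a ha b hb hab => omap_lt_omap hX hY hotp ha hb hab)
    (bdd_subset hS hX) (bdd_subset (by
      have h5 := image_mono (f := omap X Y) hS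
      rw [omap_image_eq hX hY hotp] at h5
      exact h5) hY)

include hX hY hotp in
theorem omap_image_subset {S : Set Ordinal} (hS : S ⊆ X) : omap X Y '' S ⊆ Y := by
  have h5 := image_mono (f := omap X Y) hS
  rw [omap_image_eq hX hY hotp] at h5
  exact h5

include hX hY hotp in
theorem omap_image_id {S : Set Ordinal} (hS : S ⊆ X) (hfix : ∀ x ∈ S, omap X Y x = x) :
    omap X Y '' S = S := by
  apply Set.eq_of_subset_of_subset
  · rintro b ⟨s, hs, rfl⟩; rw [hfix s hs]; exact hs
  · intro s hs; exact ⟨s, hs, hfix s hs⟩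

end Omap
end KurepaAux


namespace KurepaAux

open TwoCardinal

section Mlevel

variable {κ : Cardinal.{0}} {M : TwoCardinal κ}

theorem bddM (X : M.mu) : Bdd (X : Set Ordinal) :=
  ⟨(Order.succ κ).ord, M.mem_sub X X.2⟩

theorem bddM' {S : Set Ordinal} (h : S ∈ M.mu) : Bdd S :=
  ⟨(Order.succ κ).ord, M.mem_sub S h⟩

theorem coe_inj {X Y : M.mu} (h : (X : Set Ordinal) = (Y : Set Ordinal)) : X = Y :=
  Subtype.ext h

theorem rank_lt_of_ssubset {X Y : M.mu} (h : (X : Set Ordinal) ⊂ (Y : Set Ordinal)) :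
    M.wf.rank X < M.wf.rank Y :=
  M.wf.rank_lt_of_rel h

theorem rank_mono {X Y : M.mu} (h : (X : Set Ordinal) ⊆ (Y : Set Ordinal)) :
    M.wf.rank X ≤ M.wf.rank Y := by
  rcases Set.eq_or_ssubset_of_subset h with h1 | h1
  · rw [coe_inj h1]
  · exact (rank_lt_of_ssubset h1).le

theorem isRegular_lift (hκ : κ.IsRegular) : (Cardinal.lift.{1} κ).IsRegular := by
  constructor
  · exact Cardinal.aleph0_le_lift.2 hκ.1
  · have h1 : (Cardinal.lift.{1} κ).ord = Ordinal.lift.{1} κ.ord := (Cardinal.lift_ord κ).symm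
    rw [h1, ← Ordinal.lift_cof]
    exact Cardinal.lift_le.2 hκ.2

theorem rank_lt_lift (hκ : κ.IsRegular) (X : M.mu) :
    M.wf.rank X < Ordinal.lift.{1} κ.ord := by
  refine M.wf.induction
    (C := fun X => M.wf.rank X < Ordinal.lift.{1} κ.ord) X ?_
  intro Y IH
  rw [M.wf.rank_eq]
  rw [Cardinal.lift_ord]
  refine Cardinal.iSup_lt_ord_of_isRegular (isRegular_lift hκ) (M.locSmall Y) ?_
  intro b
  have h1 : M.wf.rank b < (Cardinal.lift.{1} κ).ord := by
    rw [← Cardinal.lift_ord]; exact IH b b.2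
  exact (Cardinal.isSuccLimit_ord (isRegular_lift hκ).1).succ_lt h1

theorem rank_spec (hκ : κ.IsRegular) (X : M.mu) :
    Ordinal.lift.{1} (M.rank X) = M.wf.rank X := by
  obtain ⟨a, ha⟩ := Ordinal.mem_range_lift_of_le (rank_lt_lift hκ X).le
  have h2 : M.rank X = a := olower_eq ha
  rw [h2]; exact ha

theorem rank_lt_ord (hκ : κ.IsRegular) (X : M.mu) : M.rank X < κ.ord := by
  rw [← Ordinal.lift_lt.{1}, rank_spec hκ]
  exact rank_lt_lift hκ X

theorem rank_eq_iff (hκ : κ.IsRegular) {X Y : M.mu} :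
    M.rank X = M.rank Y ↔ M.wf.rank X = M.wf.rank Y := by
  rw [← rank_spec hκ X, ← rank_spec hκ Y, Ordinal.lift_inj]

theorem exists_ssubset_rank_eq (X : M.mu) :
    ∀ ξ, ξ < M.wf.rank X →
      ∃ Z : M.mu, (Z : Set Ordinal) ⊂ (X : Set Ordinal) ∧ M.wf.rank Z = ξ := by
  refine M.wf.induction (C := fun X => ∀ ξ, ξ < M.wf.rank X →
    ∃ Z : M.mu, (Z : Set Ordinal) ⊂ (X : Set Ordinal) ∧ M.wf.rank Z = ξ) X ?_
  intro W IH ξ hξ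
  rw [M.wf.rank_eq] at hξ
  obtain ⟨⟨Z, hZ⟩, h2⟩ := Ordinal.lt_iSup_iff.1 hξ
  have h3 : ξ ≤ M.wf.rank Z := Order.lt_succ_iff.1 h2
  rcases eq_or_lt_of_le h3 with h4 | h4
  · exact ⟨Z, hZ, h4.symm⟩
  · obtain ⟨Z', hZ', h5⟩ := IH Z hZ ξ h4
    exact ⟨Z', hZ'.trans hZ, h5⟩

theorem directed' (X Y : M.mu) :
    ∃ Z : M.mu, (X : Set Ordinal) ⊆ (Z : Set Ordinal) ∧ (Y : Set Ordinal) ⊆ (Z : Set Ordinal) := by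
  obtain ⟨Z, hZ, h1, h2⟩ := M.directed X X.2 Y Y.2
  exact ⟨⟨Z, hZ⟩, h1, h2⟩

theorem mem_of_lt (M : TwoCardinal κ) (α : Ordinal) (hα : α < (Order.succ κ).ord) :
    ∃ X : M.mu, α ∈ (X : Set Ordinal) := by
  have h1 : α ∈ ⋃₀ M.mu := M.covers ▸ hα
  obtain ⟨X, hX, h2⟩ := h1
  exact ⟨⟨X, hX⟩, h2⟩

theorem mem_of_pair (M : TwoCardinal κ) {α β : Ordinal} (hα : α < (Order.succ κ).ord) (hβ : β < (Order.succ κ).ord) :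
    ∃ W : M.mu, α ∈ (W : Set Ordinal) ∧ β ∈ (W : Set Ordinal) := by
  obtain ⟨X, hX⟩ := mem_of_lt M α hα
  obtain ⟨Y, hY⟩ := mem_of_lt M β hβ
  obtain ⟨W, h1, h2⟩ := directed' X Y
  exact ⟨W, h1 hX, h2 hY⟩

section Star

variable {κ : Cardinal.{0}} {M : TwoCardinal κ} {W X₁ X₂ : M.mu}
variable (hstar : IsStar (X₁ : Set Ordinal) (X₂ : Set Ordinal) (W : Set Ordinal))
variable (hcone : {Z | Z ∈ M.mu ∧ Z ⊂ (W : Set Ordinal)} =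
    {Z | Z ∈ M.mu ∧ Z ⊂ (X₁ : Set Ordinal)} ∪ {Z | Z ∈ M.mu ∧ Z ⊂ (X₂ : Set Ordinal)} ∪
      {(X₁ : Set Ordinal), (X₂ : Set Ordinal)})

include hcone in
theorem star_ssub₁ : (X₁ : Set Ordinal) ⊂ (W : Set Ordinal) := by
  have h1 : (X₁ : Set Ordinal) ∈ {Z | Z ∈ M.mu ∧ Z ⊂ (W : Set Ordinal)} := by
    rw [hcone]; exact Or.inr (Set.mem_insert _ _)
  exact h1.2

include hcone in
theorem star_ssub₂ : (X₂ : Set Ordinal) ⊂ (W : Set Ordinal) := by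
  have h1 : (X₂ : Set Ordinal) ∈ {Z | Z ∈ M.mu ∧ Z ⊂ (W : Set Ordinal)} := by
    rw [hcone]; exact Or.inr (Set.mem_insert_of_mem _ rfl)
  exact h1.2

include hstar hcone in
theorem star_diff₁ : ((X₁ : Set Ordinal) \ (X₂ : Set Ordinal)).Nonempty := by
  rw [Set.nonempty_iff_ne_empty]
  intro h
  have h1 : (X₁ : Set Ordinal) ⊆ (X₂ : Set Ordinal) := Set.diff_eq_empty.1 h
  have h2 : (W : Set Ordinal) = (X₂ : Set Ordinal) := by
    rw [hstar.2.1, Set.union_eq_self_of_subset_left h1]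
  exact absurd (h2 ▸ star_ssub₂ hcone) (ssubset_irrefl _)

include hstar hcone in
theorem star_diff₂ : ((X₂ : Set Ordinal) \ (X₁ : Set Ordinal)).Nonempty := by
  rw [Set.nonempty_iff_ne_empty]
  intro h
  have h1 : (X₂ : Set Ordinal) ⊆ (X₁ : Set Ordinal) := Set.diff_eq_empty.1 h
  have h2 : (W : Set Ordinal) = (X₁ : Set Ordinal) := by
    rw [hstar.2.1, Set.union_eq_self_of_subset_right h1]
  exact absurd (h2 ▸ star_ssub₁ hcone) (ssubset_irrefl _)

include hstar hcone in
theorem star_trace {a : Ordinal} (ha : a ∈ (X₁ : Set Ordinal) ∩ (X₂ : Set Ordinal)) :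
    (X₁ : Set Ordinal) ∩ Set.Iio a = (X₂ : Set Ordinal) ∩ Set.Iio a := by
  ext x
  constructor
  · rintro ⟨hx1, hxa⟩
    refine ⟨?_, hxa⟩
    by_contra hx2
    exact absurd hxa (not_lt.2 (hstar.2.2.1 a ha x ⟨hx1, hx2⟩).le)
  · rintro ⟨hx2, hxa⟩
    refine ⟨?_, hxa⟩
    by_contra hx1
    obtain ⟨b, hb⟩ := star_diff₁ hstar hcone
    have h1 : a < b := hstar.2.2.1 a ha b hb
    have h2 : b < x := hstar.2.2.2 b hb x ⟨hx2, hx1⟩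
    exact absurd hxa (not_lt.2 (h1.trans h2).le)

include hcone in
theorem star_decomp {Z : Set Ordinal} (hZmu : Z ∈ M.mu) (h : Z ⊆ (W : Set Ordinal)) :
    Z = (W : Set Ordinal) ∨ Z ⊆ (X₁ : Set Ordinal) ∨ Z ⊆ (X₂ : Set Ordinal) := by
  rcases Set.eq_or_ssubset_of_subset h with h1 | h1
  · exact Or.inl h1
  · have h2 : Z ∈ {Z | Z ∈ M.mu ∧ Z ⊂ (W : Set Ordinal)} := ⟨hZmu, h1⟩
    rw [hcone] at h2
    rcases h2 with (h3 | h3) | h3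
    · exact Or.inr (Or.inl h3.2.subset)
    · exact Or.inr (Or.inr h3.2.subset)
    · rcases h3 with h4 | h4
      · exact Or.inr (Or.inl h4.subset)
      · exact Or.inr (Or.inr (le_of_eq h4))

include hstar hcone in
theorem star_rank (h12 : M.wf.rank X₁ = M.wf.rank X₂) :
    M.wf.rank W = Order.succ (M.wf.rank X₁) := by
  apply le_antisymm
  · rw [M.wf.rank_eq]
    refine Ordinal.iSup_le ?_
    rintro ⟨Z, hZ⟩
    rw [Order.succ_le_succ_iff]
    rcases star_decomp hcone Z.2 hZ.subset with h1 | h1 | h1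
    · exact absurd h1 hZ.ne
    · exact rank_mono h1
    · exact (rank_mono h1).trans h12.ge
  · exact Order.succ_le_of_lt (rank_lt_of_ssubset (star_ssub₁ hcone))

end Star

section Homog

variable {κ : Cardinal.{0}} {M : TwoCardinal κ} {X Y : M.mu} (h : M.wf.rank X = M.wf.rank Y)

include h in
theorem homog_otp : otp (X : Set Ordinal) = otp (Y : Set Ordinal) := (M.homog X Y h).1

include h in
theorem image_mem {S : Set Ordinal} (hSmu : S ∈ M.mu) (hS : S ⊂ (X : Set Ordinal)) :
    omap (X : Set Ordinal) (Y : Set Ordinal) '' S ∈ M.mu ∧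
      omap (X : Set Ordinal) (Y : Set Ordinal) '' S ⊂ (Y : Set Ordinal) := by
  have h1 : omap (X : Set Ordinal) (Y : Set Ordinal) '' S ∈
      {Z | Z ∈ M.mu ∧ Z ⊂ (Y : Set Ordinal)} := by
    rw [(M.homog X Y h).2]
    exact ⟨S, ⟨hSmu, hS⟩, rfl⟩
  exact h1

include h in
theorem preimage_mem {T : Set Ordinal} (hTmu : T ∈ M.mu) (hT : T ⊂ (Y : Set Ordinal)) :
    ∃ S : M.mu, (S : Set Ordinal) ⊂ (X : Set Ordinal) ∧
      T = omap (X : Set Ordinal) (Y : Set Ordinal) '' (S : Set Ordinal) := by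
  have h1 : T ∈ {Z | Z ∈ M.mu ∧ Z ⊂ (Y : Set Ordinal)} := ⟨hTmu, hT⟩
  rw [(M.homog X Y h).2] at h1
  obtain ⟨S, ⟨hSmu, hSss⟩, heq⟩ := h1
  exact ⟨⟨S, hSmu⟩, hSss, heq.symm⟩

include h in
theorem omap_injOn' : Set.InjOn (omap (X : Set Ordinal) (Y : Set Ordinal)) (X : Set Ordinal) :=
  fun a ha b hb => omap_injOn (bddM X) (bddM Y) (homog_otp h) ha hb

include h in
theorem rank_image_eq (S : M.mu) :
    (S : Set Ordinal) ⊂ (X : Set Ordinal) → ∀ S' : M.mu,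
      (S' : Set Ordinal) = omap (X : Set Ordinal) (Y : Set Ordinal) '' (S : Set Ordinal) →
      M.wf.rank S' = M.wf.rank S := by
  refine M.wf.induction (C := fun S => (S : Set Ordinal) ⊂ (X : Set Ordinal) → ∀ S' : M.mu,
      (S' : Set Ordinal) = omap (X : Set Ordinal) (Y : Set Ordinal) '' (S : Set Ordinal) →
      M.wf.rank S' = M.wf.rank S) S ?_
  intro S IH hS S' hS'
  have hinj := omap_injOn' h
  have himS : (S' : Set Ordinal) ⊂ (Y : Set Ordinal) := by
    rw [hS']
    refine Set.ssubset_iff_subset_ne.2 ⟨omap_image_subset (bddM X) (bddM Y) (homog_otp h)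
      hS.subset, ?_⟩
    intro hcontra
    have hcontra2 := hcontra.trans (omap_image_eq (bddM X) (bddM Y) (homog_otp h)).symm
    exact hS.ne ((hinj.image_eq_image_iff hS.subset subset_rfl).1 hcontra2)
  apply le_antisymm
  · rw [M.wf.rank_eq (a := S')]
    refine Ordinal.iSup_le ?_
    rintro ⟨T', hT'⟩
    rw [Order.succ_le_iff]
    have hT'Y : (T' : Set Ordinal) ⊂ (Y : Set Ordinal) := hT'.trans himS
    obtain ⟨T, hTX, heq⟩ := preimage_mem h T'.2 hT'Y
    have hTsubS : (T : Set Ordinal) ⊂ (S : Set Ordinal) := by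
      have h2 : (T' : Set Ordinal) ⊂
          omap (X : Set Ordinal) (Y : Set Ordinal) '' (S : Set Ordinal) := hS' ▸ hT'
      rw [heq] at h2
      refine Set.ssubset_iff_subset_ne.2
        ⟨(hinj.image_subset_image_iff hTX.subset hS.subset).1 h2.subset, ?_⟩
      intro hc
      exact h2.ne (congrArg (fun s => omap (X : Set Ordinal) (Y : Set Ordinal) '' s) hc)
    rw [IH T hTsubS hTX T' heq]
    exact rank_lt_of_ssubset hTsubS
  · rw [M.wf.rank_eq (a := S)]
    refine Ordinal.iSup_le ?_
    rintro ⟨T, hT⟩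
    rw [Order.succ_le_iff]
    have hTX : (T : Set Ordinal) ⊂ (X : Set Ordinal) := hT.trans hS
    obtain ⟨hmem, him⟩ := image_mem h T.2 hTX
    set T'' : M.mu := ⟨omap (X : Set Ordinal) (Y : Set Ordinal) '' (T : Set Ordinal), hmem⟩
      with hT''
    have h3 : M.wf.rank T'' = M.wf.rank T := IH T hT hTX T'' rfl
    have h4 : (T'' : Set Ordinal) ⊂ (S' : Set Ordinal) := by
      rw [hS']
      refine Set.ssubset_iff_subset_ne.2 ⟨Set.image_mono hT.subset, ?_⟩
      intro hc
      exact hT.ne ((hinj.image_eq_image_iff (hT.subset.trans hS.subset) hS.subset).1 hc)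
    rw [← h3]
    exact rank_lt_of_ssubset h4

end Homog

section Core

variable {κ : Cardinal.{0}} {M : TwoCardinal κ}

theorem pullback {A B : M.mu} (hAB : M.wf.rank A = M.wf.rank B)
    (htrace : ∀ a, a ∈ (A : Set Ordinal) ∩ (B : Set Ordinal) →
      (A : Set Ordinal) ∩ Set.Iio a = (B : Set Ordinal) ∩ Set.Iio a)
    {Z : M.mu} (hZ : (Z : Set Ordinal) ⊂ (B : Set Ordinal)) {α : Ordinal}
    (hαZ : α ∈ (Z : Set Ordinal)) (hα : α ∈ (A : Set Ordinal) ∩ (B : Set Ordinal)) :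
    ∃ S : M.mu, (S : Set Ordinal) ⊂ (A : Set Ordinal) ∧ M.wf.rank S = M.wf.rank Z ∧
      α ∈ (S : Set Ordinal) ∧
      (S : Set Ordinal) ∩ Set.Iio α = (Z : Set Ordinal) ∩ Set.Iio α := by
  obtain ⟨S, hS, heq⟩ := preimage_mem hAB Z.2 hZ
  have hbA := bddM A
  have hbB := bddM B
  have hotp := homog_otp hAB
  have hfixα : omap (A : Set Ordinal) (B : Set Ordinal) α = α :=
    omap_fix hbA hbB hα.1 hα.2 (htrace α hα)
  have hαS : α ∈ (S : Set Ordinal) := by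
    have h1 : α ∈ omap (A : Set Ordinal) (B : Set Ordinal) '' (S : Set Ordinal) := heq ▸ hαZ
    obtain ⟨s, hs, hs2⟩ := h1
    have h2 : s = α := omap_injOn hbA hbB hotp (hS.subset hs) hα.1 (hs2.trans hfixα.symm)
    exact h2 ▸ hs
  have hfix : ∀ x ∈ (S : Set Ordinal) ∩ Set.Iio α,
      omap (A : Set Ordinal) (B : Set Ordinal) x = x := by
    rintro x ⟨hxS, hxα⟩
    have hxA : x ∈ (A : Set Ordinal) := hS.subset hxS
    have hxB : x ∈ (B : Set Ordinal) := by
      have h1 : x ∈ (A : Set Ordinal) ∩ Set.Iio α := ⟨hxA, hxα⟩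
      rw [htrace α hα] at h1
      exact h1.1
    exact omap_fix hbA hbB hxA hxB (htrace x ⟨hxA, hxB⟩)
  have htr : (S : Set Ordinal) ∩ Set.Iio α = (Z : Set Ordinal) ∩ Set.Iio α := by
    have h1 : omap (A : Set Ordinal) (B : Set Ordinal) '' ((S : Set Ordinal) ∩ Set.Iio α) =
        (omap (A : Set Ordinal) (B : Set Ordinal) '' (S : Set Ordinal)) ∩
          Set.Iio (omap (A : Set Ordinal) (B : Set Ordinal) α) :=
      omap_image_inter hbA hbB hotp hS.subset hα.1
    rw [omap_image_id hbA hbB hotp (Set.inter_subset_left.trans hS.subset) hfix, hfixα,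
      ← heq] at h1
    exact h1
  exact ⟨S, hS, (rank_image_eq hAB S hS Z heq).symm, hαS, htr⟩

theorem trace_eq_aux (W : M.mu) : ∀ X Z : M.mu,
    (X : Set Ordinal) ⊆ (W : Set Ordinal) → (Z : Set Ordinal) ⊆ (W : Set Ordinal) →
    ∀ α, α ∈ (X : Set Ordinal) → α ∈ (Z : Set Ordinal) → M.wf.rank X = M.wf.rank Z →
    (X : Set Ordinal) ∩ Set.Iio α = (Z : Set Ordinal) ∩ Set.Iio α := by
  refine M.wf.induction (C := fun W => ∀ X Z : M.mu,
    (X : Set Ordinal) ⊆ (W : Set Ordinal) → (Z : Set Ordinal) ⊆ (W : Set Ordinal) →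
    ∀ α, α ∈ (X : Set Ordinal) → α ∈ (Z : Set Ordinal) → M.wf.rank X = M.wf.rank Z →
    (X : Set Ordinal) ∩ Set.Iio α = (Z : Set Ordinal) ∩ Set.Iio α) W ?_
  intro W IH X Z hXW hZW α hαX hαZ hrk
  by_cases hXeq : (X : Set Ordinal) = (W : Set Ordinal)
  · have hZX : (Z : Set Ordinal) ⊆ (X : Set Ordinal) := hXeq ▸ hZW
    rcases Set.eq_or_ssubset_of_subset hZX with h1 | h1
    · rw [h1]
    · exact absurd hrk (rank_lt_of_ssubset h1).ne'
  by_cases hZeq : (Z : Set Ordinal) = (W : Set Ordinal)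
  · have hXZ : (X : Set Ordinal) ⊆ (Z : Set Ordinal) := hZeq ▸ hXW
    rcases Set.eq_or_ssubset_of_subset hXZ with h1 | h1
    · rw [h1]
    · exact absurd hrk (rank_lt_of_ssubset h1).ne
  have hXss : (X : Set Ordinal) ⊂ (W : Set Ordinal) := ⟨hXW, fun h => hXeq (subset_antisymm hXW h)⟩
  have hZss : (Z : Set Ordinal) ⊂ (W : Set Ordinal) := ⟨hZW, fun h => hZeq (subset_antisymm hZW h)⟩
  rcases M.locAlmostDirected W with hdir | ⟨X₁, X₂, h12, hstar, hcone⟩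
  · obtain ⟨V, hVmu, hVW, hXV, hZV⟩ := hdir X X.2 Z Z.2 hXss hZss
    exact IH ⟨V, hVmu⟩ hVW X Z hXV hZV α hαX hαZ hrk
  · have key : ∀ (A B : M.mu), M.wf.rank A = M.wf.rank B →
        (∀ a, a ∈ (A : Set Ordinal) ∩ (B : Set Ordinal) →
          (A : Set Ordinal) ∩ Set.Iio a = (B : Set Ordinal) ∩ Set.Iio a) →
        (A : Set Ordinal) ⊂ (W : Set Ordinal) →
        ∀ X Z : M.mu, (X : Set Ordinal) ⊆ (A : Set Ordinal) →
        (Z : Set Ordinal) ⊆ (B : Set Ordinal) →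
        α ∈ (X : Set Ordinal) → α ∈ (Z : Set Ordinal) → M.wf.rank X = M.wf.rank Z →
        (X : Set Ordinal) ∩ Set.Iio α = (Z : Set Ordinal) ∩ Set.Iio α := by
      intro A B hAB htrace hAW X Z hXA hZB hαX hαZ hrk
      have hα : α ∈ (A : Set Ordinal) ∩ (B : Set Ordinal) := ⟨hXA hαX, hZB hαZ⟩
      rcases Set.eq_or_ssubset_of_subset hZB with h1 | h1
      · have h2 : M.wf.rank X = M.wf.rank A := by
          rw [hrk, coe_inj h1, ← hAB]
        have h3 : (X : Set Ordinal) = (A : Set Ordinal) := by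
          rcases Set.eq_or_ssubset_of_subset hXA with h4 | h4
          · exact h4
          · exact absurd h2 (rank_lt_of_ssubset h4).ne
        rw [h3, h1]
        exact htrace α hα
      · obtain ⟨S, hSA, hrkS, hαS, htr⟩ := pullback hAB htrace h1 hαZ hα
        have h2 := IH A hAW X S hXA hSA.subset α hαX hαS (by rw [hrk, ← hrkS])
        rw [h2, htr]
    rcases star_decomp hcone X.2 hXW with h1 | hX1 | hX2
    · exact absurd h1 hXeq
    all_goals rcases star_decomp hcone Z.2 hZW with h1 | hZ1 | hZ2
    · exact absurd h1 hZeq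
    · exact IH X₁ (star_ssub₁ hcone) X Z hX1 hZ1 α hαX hαZ hrk
    · exact key X₁ X₂ h12 (fun a ha => star_trace hstar hcone ha) (star_ssub₁ hcone)
        X Z hX1 hZ2 hαX hαZ hrk
    · exact absurd h1 hZeq
    · exact (key X₁ X₂ h12 (fun a ha => star_trace hstar hcone ha) (star_ssub₁ hcone)
        Z X hZ1 hX2 hαZ hαX hrk.symm).symm
    · exact IH X₂ (star_ssub₂ hcone) X Z hX2 hZ2 α hαX hαZ hrk

theorem trace_eq {X Z : M.mu} {α : Ordinal} (hαX : α ∈ (X : Set Ordinal))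
    (hαZ : α ∈ (Z : Set Ordinal)) (hrk : M.wf.rank X = M.wf.rank Z) :
    (X : Set Ordinal) ∩ Set.Iio α = (Z : Set Ordinal) ∩ Set.Iio α := by
  obtain ⟨W, h1, h2⟩ := directed' X Z
  exact trace_eq_aux W X Z h1 h2 α hαX hαZ hrk

theorem push_down_aux (W : M.mu) : ∀ X Z : M.mu,
    (X : Set Ordinal) ⊆ (W : Set Ordinal) → (Z : Set Ordinal) ⊆ (W : Set Ordinal) →
    ∀ α, α ∈ (X : Set Ordinal) → α ∈ (Z : Set Ordinal) → M.wf.rank Z < M.wf.rank X →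
    ∃ Z' : M.mu, (Z' : Set Ordinal) ⊂ (X : Set Ordinal) ∧ M.wf.rank Z' = M.wf.rank Z ∧
      α ∈ (Z' : Set Ordinal) := by
  refine M.wf.induction (C := fun W => ∀ X Z : M.mu,
    (X : Set Ordinal) ⊆ (W : Set Ordinal) → (Z : Set Ordinal) ⊆ (W : Set Ordinal) →
    ∀ α, α ∈ (X : Set Ordinal) → α ∈ (Z : Set Ordinal) → M.wf.rank Z < M.wf.rank X →
    ∃ Z' : M.mu, (Z' : Set Ordinal) ⊂ (X : Set Ordinal) ∧ M.wf.rank Z' = M.wf.rank Z ∧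
      α ∈ (Z' : Set Ordinal)) W ?_
  intro W IH X Z hXW hZW α hαX hαZ hrk
  by_cases hXeq : (X : Set Ordinal) = (W : Set Ordinal)
  · have hZX : (Z : Set Ordinal) ⊆ (X : Set Ordinal) := hXeq ▸ hZW
    rcases Set.eq_or_ssubset_of_subset hZX with h1 | h1
    · exact absurd hrk (by rw [coe_inj h1]; exact lt_irrefl _)
    · exact ⟨Z, h1, rfl, hαZ⟩
  have hXss : (X : Set Ordinal) ⊂ (W : Set Ordinal) := ⟨hXW, fun h => hXeq (subset_antisymm hXW h)⟩
  have hZeq : (Z : Set Ordinal) ≠ (W : Set Ordinal) := by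
    intro h
    exact absurd (hrk.trans_le (rank_mono hXW)) (by rw [coe_inj h]; exact lt_irrefl _)
  have hZss : (Z : Set Ordinal) ⊂ (W : Set Ordinal) := ⟨hZW, fun h => hZeq (subset_antisymm hZW h)⟩
  rcases M.locAlmostDirected W with hdir | ⟨X₁, X₂, h12, hstar, hcone⟩
  · obtain ⟨V, hVmu, hVW, hXV, hZV⟩ := hdir X X.2 Z Z.2 hXss hZss
    exact IH ⟨V, hVmu⟩ hVW X Z hXV hZV α hαX hαZ hrk
  · have key : ∀ (A B : M.mu), M.wf.rank A = M.wf.rank B →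
        (∀ a, a ∈ (A : Set Ordinal) ∩ (B : Set Ordinal) →
          (A : Set Ordinal) ∩ Set.Iio a = (B : Set Ordinal) ∩ Set.Iio a) →
        (A : Set Ordinal) ⊂ (W : Set Ordinal) →
        ∀ X Z : M.mu, (X : Set Ordinal) ⊆ (A : Set Ordinal) →
        (Z : Set Ordinal) ⊆ (B : Set Ordinal) →
        α ∈ (X : Set Ordinal) → α ∈ (Z : Set Ordinal) → M.wf.rank Z < M.wf.rank X →
        ∃ Z' : M.mu, (Z' : Set Ordinal) ⊂ (X : Set Ordinal) ∧ M.wf.rank Z' = M.wf.rank Z ∧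
          α ∈ (Z' : Set Ordinal) := by
      intro A B hAB htrace hAW X Z hXA hZB hαX hαZ hrk
      have hα : α ∈ (A : Set Ordinal) ∩ (B : Set Ordinal) := ⟨hXA hαX, hZB hαZ⟩
      rcases Set.eq_or_ssubset_of_subset hZB with h1 | h1
      · exfalso
        have h2 : M.wf.rank Z = M.wf.rank A := by rw [coe_inj h1, ← hAB]
        exact absurd (hrk.trans_le (rank_mono hXA)) (by rw [h2]; exact lt_irrefl _)
      · obtain ⟨S, hSA, hrkS, hαS, htr⟩ := pullback hAB htrace h1 hαZ hα
        obtain ⟨Z', hZ'X, hrkZ', hαZ'⟩ :=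
          IH A hAW X S hXA hSA.subset α hαX hαS (by rw [hrkS]; exact hrk)
        exact ⟨Z', hZ'X, by rw [hrkZ', hrkS], hαZ'⟩
    rcases star_decomp hcone X.2 hXW with h1 | hX1 | hX2
    · exact absurd h1 hXeq
    all_goals rcases star_decomp hcone Z.2 hZW with h1 | hZ1 | hZ2
    · exact absurd h1 hZeq
    · exact IH X₁ (star_ssub₁ hcone) X Z hX1 hZ1 α hαX hαZ hrk
    · exact key X₁ X₂ h12 (fun a ha => star_trace hstar hcone ha) (star_ssub₁ hcone)
        X Z hX1 hZ2 hαX hαZ hrk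
    · exact absurd h1 hZeq
    · exact key X₂ X₁ h12.symm
        (fun a ha => (star_trace hstar hcone ⟨ha.2, ha.1⟩).symm) (star_ssub₂ hcone)
        X Z hX2 hZ1 hαX hαZ hrk
    · exact IH X₂ (star_ssub₂ hcone) X Z hX2 hZ2 α hαX hαZ hrk

theorem push_down {X Z : M.mu} {α : Ordinal} (hαX : α ∈ (X : Set Ordinal))
    (hαZ : α ∈ (Z : Set Ordinal)) (hrk : M.wf.rank Z < M.wf.rank X) :
    ∃ Z' : M.mu, (Z' : Set Ordinal) ⊂ (X : Set Ordinal) ∧ M.wf.rank Z' = M.wf.rank Z ∧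
      α ∈ (Z' : Set Ordinal) := by
  obtain ⟨W, h1, h2⟩ := directed' X Z
  exact push_down_aux W X Z h1 h2 α hαX hαZ hrk

theorem exists_rank_mem_aux (W : M.mu) : ∀ α, α ∈ (W : Set Ordinal) →
    ∀ ξ, ξ < M.wf.rank W →
    ∃ Z : M.mu, (Z : Set Ordinal) ⊆ (W : Set Ordinal) ∧ M.wf.rank Z = ξ ∧
      α ∈ (Z : Set Ordinal) := by
  refine M.wf.induction (C := fun W => ∀ α, α ∈ (W : Set Ordinal) →
    ∀ ξ, ξ < M.wf.rank W →
    ∃ Z : M.mu, (Z : Set Ordinal) ⊆ (W : Set Ordinal) ∧ M.wf.rank Z = ξ ∧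
      α ∈ (Z : Set Ordinal)) W ?_
  intro W IH α hα ξ hξ
  rcases M.locAlmostDirected W with hdir | ⟨X₁, X₂, h12, hstar, hcone⟩
  · have hrk0 : M.wf.rank W ≠ 0 := by
      intro h
      rw [h] at hξ
      exact absurd hξ (not_lt_of_ge (zero_le (a := ξ)))
    have hneat := M.neat W hrk0
    have hαU : α ∈ ⋃₀ {Z | Z ∈ M.mu ∧ Z ⊂ (W : Set Ordinal)} := hneat ▸ hα
    obtain ⟨Y, ⟨hYmu, hYss⟩, hαY⟩ := hαU
    obtain ⟨Z₀, hZ₀ss, hZ₀rk⟩ := exists_ssubset_rank_eq W ξ hξ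
    obtain ⟨V, hVmu, hVss, hYV, hZ₀V⟩ := hdir Y hYmu (Z₀ : Set Ordinal) Z₀.2 hYss hZ₀ss
    have hrkV : ξ ≤ M.wf.rank (⟨V, hVmu⟩ : M.mu) := by
      rw [← hZ₀rk]
      exact rank_mono hZ₀V
    rcases eq_or_lt_of_le hrkV with h1 | h1
    · exact ⟨⟨V, hVmu⟩, hVss.subset, h1.symm, hYV hαY⟩
    · obtain ⟨Z, hZV, hZrk, hαZ⟩ := IH ⟨V, hVmu⟩ hVss α (hYV hαY) ξ h1
      exact ⟨Z, hZV.trans hVss.subset, hZrk, hαZ⟩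
  · have hsr := star_rank hstar hcone h12
    have hξ' : ξ ≤ M.wf.rank X₁ := by
      rw [hsr] at hξ
      exact Order.lt_succ_iff.1 hξ
    have hαU : α ∈ (X₁ : Set Ordinal) ∪ (X₂ : Set Ordinal) := hstar.2.1 ▸ hα
    rcases hαU with hα1 | hα2
    · rcases eq_or_lt_of_le hξ' with h1 | h1
      · exact ⟨X₁, (star_ssub₁ hcone).subset, h1.symm, hα1⟩
      · obtain ⟨Z, hZ1, hZrk, hαZ⟩ := IH X₁ (star_ssub₁ hcone) α hα1 ξ h1
        exact ⟨Z, hZ1.trans (star_ssub₁ hcone).subset, hZrk, hαZ⟩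
    · have hξ'' : ξ ≤ M.wf.rank X₂ := hξ'.trans h12.le
      rcases eq_or_lt_of_le hξ'' with h1 | h1
      · exact ⟨X₂, (star_ssub₂ hcone).subset, h1.symm, hα2⟩
      · obtain ⟨Z, hZ2, hZrk, hαZ⟩ := IH X₂ (star_ssub₂ hcone) α hα2 ξ h1
        exact ⟨Z, hZ2.trans (star_ssub₂ hcone).subset, hZrk, hαZ⟩

end Core

section Seq

variable {κ : Cardinal.{0}} {M : TwoCardinal κ}

theorem seq_eq (hκ : κ.IsRegular) {X : M.mu} {α ξ : Ordinal}
    (hr : M.rank X = ξ) (hα : α ∈ (X : Set Ordinal)) :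
    M.seq α ξ = (X : Set Ordinal) ∩ Set.Iio α := by
  apply Set.eq_of_subset_of_subset
  · refine Set.sUnion_subset ?_
    rintro S ⟨X', hr', hα', rfl⟩
    have h1 : M.wf.rank X' = M.wf.rank X := (rank_eq_iff hκ).1 (hr'.trans hr.symm)
    rw [trace_eq hα' hα h1]
  · exact Set.subset_sUnion_of_mem ⟨X, hr, hα, rfl⟩

theorem seq_empty {α ξ : Ordinal} (h : ¬ ∃ X : M.mu, M.rank X = ξ ∧ α ∈ (X : Set Ordinal)) :
    M.seq α ξ = ∅ := by
  have h1 : {S | ∃ X : M.mu, M.rank X = ξ ∧ α ∈ (X : Set Ordinal) ∧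
      S = (X : Set Ordinal) ∩ Set.Iio α} = ∅ := by
    rw [Set.eq_empty_iff_forall_notMem]
    rintro S ⟨X, h1, h2, _⟩
    exact h ⟨X, h1, h2⟩
  rw [TwoCardinal.seq, h1, Set.sUnion_empty]

theorem bdd_seq (α ξ : Ordinal) : Bdd (M.seq α ξ) := by
  refine ⟨α, ?_⟩
  refine Set.sUnion_subset ?_
  rintro S ⟨X, _, _, rfl⟩
  exact Set.inter_subset_right

theorem seq_card_lt (hκ : κ.IsRegular) (α ξ : Ordinal) :
    #(M.seq α ξ) < Cardinal.lift.{1} κ := by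
  by_cases hw : ∃ X : M.mu, M.rank X = ξ ∧ α ∈ (X : Set Ordinal)
  · obtain ⟨X, h1, h2⟩ := hw
    rw [seq_eq hκ h1 h2, mk_eq_lift_otp (bdd_subset Set.inter_subset_left (bddM X))]
    rw [Cardinal.lift_lt]
    refine lt_of_le_of_lt (Ordinal.card_le_card
      (otp_mono (bddM X) Set.inter_subset_left)) (M.mem_small X X.2)
  · rw [seq_empty hw]
    simp only [Set.coe_setOf, Cardinal.mk_emptyCollection]
    exact (Cardinal.aleph0_pos.trans_le (isRegular_lift (κ := κ) hκ).1)

theorem transfer (hκ : κ.IsRegular) {X Y : M.mu} (h : M.wf.rank X = M.wf.rank Y)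
    {α : Ordinal} (hα : α ∈ (X : Set Ordinal)) {η : Ordinal}
    (hη : Ordinal.lift.{1} η < M.wf.rank X) :
    otp (M.seq (omap (X : Set Ordinal) (Y : Set Ordinal) α) η) = otp (M.seq α η) := by
  have hbX := bddM X
  have hbY := bddM Y
  have hotp := homog_otp h
  have hβY : omap (X : Set Ordinal) (Y : Set Ordinal) α ∈ (Y : Set Ordinal) :=
    omap_mem hbX hbY hotp hα
  by_cases hw : ∃ Z : M.mu, M.rank Z = η ∧ α ∈ (Z : Set Ordinal)
  · obtain ⟨Z, hZrk, hαZ⟩ := hw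
    have hwfZ : M.wf.rank Z = Ordinal.lift.{1} η := by
      rw [← rank_spec hκ Z, hZrk]
    obtain ⟨Z', hZ'X, hwfZ', hαZ'⟩ := push_down hα hαZ (by rw [hwfZ]; exact hη)
    have hZ'rk : M.rank Z' = η := by
      rw [← Ordinal.lift_inj.{1}, rank_spec hκ Z', hwfZ', hwfZ]
    obtain ⟨hmem, him⟩ := image_mem h Z'.2 hZ'X
    have hwfZ'' : M.wf.rank (⟨_, hmem⟩ : M.mu) = M.wf.rank Z' :=
      rank_image_eq h Z' hZ'X ⟨_, hmem⟩ rfl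
    have hZ''rk : M.rank (⟨_, hmem⟩ : M.mu) = η := by
      rw [← Ordinal.lift_inj.{1}, rank_spec hκ, hwfZ'', hwfZ', hwfZ]
    have hβZ'' : omap (X : Set Ordinal) (Y : Set Ordinal) α ∈
        omap (X : Set Ordinal) (Y : Set Ordinal) '' (Z' : Set Ordinal) :=
      Set.mem_image_of_mem _ hαZ'
    rw [seq_eq hκ hZ'rk hαZ', seq_eq hκ hZ''rk hβZ'']
    show otp (omap (X : Set Ordinal) (Y : Set Ordinal) '' (Z' : Set Ordinal) ∩
      Set.Iio (omap (X : Set Ordinal) (Y : Set Ordinal) α)) = _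
    rw [← omap_image_inter hbX hbY hotp hZ'X.subset hα]
    exact omap_otp_image hbX hbY hotp (Set.inter_subset_left.trans hZ'X.subset)
  · by_cases hw' : ∃ Z : M.mu, M.rank Z = η ∧
        omap (X : Set Ordinal) (Y : Set Ordinal) α ∈ (Z : Set Ordinal)
    · exfalso
      obtain ⟨Z, hZrk, hβZ⟩ := hw'
      have hwfZ : M.wf.rank Z = Ordinal.lift.{1} η := by
        rw [← rank_spec hκ Z, hZrk]
      obtain ⟨Z', hZ'Y, hwfZ', hβZ'⟩ := push_down hβY hβZ (by rw [hwfZ, ← h]; exact hη)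
      obtain ⟨S, hSX, heq⟩ := preimage_mem h Z'.2 hZ'Y
      have hαS : α ∈ (S : Set Ordinal) := by
        have h1 : omap (X : Set Ordinal) (Y : Set Ordinal) α ∈
            omap (X : Set Ordinal) (Y : Set Ordinal) '' (S : Set Ordinal) := heq ▸ hβZ'
        obtain ⟨s, hs, hs2⟩ := h1
        exact (omap_injOn hbX hbY hotp (hSX.subset hs) hα hs2) ▸ hs
      refine hw ⟨S, ?_, hαS⟩
      rw [← Ordinal.lift_inj.{1}, rank_spec hκ S, ← rank_image_eq h S hSX Z' heq, hwfZ', hwfZ]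
    · rw [seq_empty hw, seq_empty hw']

theorem exists_rank (hκ : κ.IsRegular) (M : TwoCardinal κ) {ξ : Ordinal} (hξ : ξ < κ.ord) :
    ∃ X : M.mu, M.wf.rank X = Ordinal.lift.{1} ξ := by
  by_contra hcon
  push_neg at hcon
  have hall : ∀ X : M.mu, M.wf.rank X < Ordinal.lift.{1} ξ := by
    intro X
    rcases lt_trichotomy (M.wf.rank X) (Ordinal.lift.{1} ξ) with h1 | h1 | h1
    · exact h1
    · exact absurd h1 (hcon X)
    · obtain ⟨Z, _, hZ⟩ := exists_ssubset_rank_eq X (Ordinal.lift.{1} ξ) h1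
      exact absurd hZ (hcon Z)
  have hκO : κ.ord < (Order.succ κ).ord := Cardinal.ord_lt_ord.2 (Order.lt_succ κ)
  have hsub : Set.Iio κ.ord ⊆ ⋃ (η : ↥(Set.Iio ξ)), M.seq κ.ord (η : Ordinal) := by
    intro b hb
    obtain ⟨W, hbW, hαW⟩ := mem_of_pair M (hb.trans hκO) hκO
    have h1 : M.rank W < ξ := by
      rw [← Ordinal.lift_lt.{1}, rank_spec hκ]
      exact hall W
    refine Set.mem_iUnion.2 ⟨⟨M.rank W, h1⟩, ?_⟩
    rw [seq_eq hκ rfl hαW]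
    exact ⟨hbW, hb⟩
  have hcard1 : #(Set.Iio κ.ord) = Cardinal.lift.{1} κ := by
    rw [Ordinal.mk_Iio_ordinal, Cardinal.card_ord]
  have hle : Cardinal.lift.{1} κ ≤ #(⋃ (η : ↥(Set.Iio ξ)), M.seq κ.ord (η : Ordinal)) := by
    rw [← hcard1]
    exact Cardinal.mk_le_mk_of_subset hsub
  have hι : #(↥(Set.Iio ξ)) < Cardinal.lift.{1} κ := by
    rw [Ordinal.mk_Iio_ordinal]
    exact Cardinal.lift_lt.2 (Cardinal.lt_ord.1 hξ)
  have hlt : #(⋃ (η : ↥(Set.Iio ξ)), M.seq κ.ord (η : Ordinal)) < Cardinal.lift.{1} κ := by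
    refine (Cardinal.mk_iUnion_le _).trans_lt ?_
    refine Cardinal.mul_lt_of_lt (isRegular_lift (κ := κ) hκ).1 hι ?_
    refine Cardinal.iSup_lt_of_isRegular (isRegular_lift (κ := κ) hκ) hι ?_
    intro i
    exact seq_card_lt hκ _ _
  exact absurd (hle.trans_lt hlt) (lt_irrefl _)

theorem exists_mem_rank (hκ : κ.IsRegular) {α : Ordinal} (hα : α < (Order.succ κ).ord)
    {ξ : Ordinal} (hξ : ξ < κ.ord) :
    ∃ Z : M.mu, M.rank Z = ξ ∧ α ∈ (Z : Set Ordinal) := by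
  obtain ⟨X₀, hX₀⟩ := exists_rank hκ M hξ
  obtain ⟨Xα, hXα⟩ := mem_of_lt M α hα
  obtain ⟨W, h1, h2⟩ := directed' X₀ Xα
  have h3 : Ordinal.lift.{1} ξ ≤ M.wf.rank W := hX₀ ▸ rank_mono h1
  rcases eq_or_lt_of_le h3 with h4 | h4
  · refine ⟨W, ?_, h2 hXα⟩
    rw [← Ordinal.lift_inj.{1}, rank_spec hκ, ← h4]
  · obtain ⟨Z, _, hZrk, hαZ⟩ := exists_rank_mem_aux W α (h2 hXα) (Ordinal.lift.{1} ξ) h4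
    refine ⟨Z, ?_, hαZ⟩
    rw [← Ordinal.lift_inj.{1}, rank_spec hκ, hZrk]

end Seq

end Mlevel

end KurepaAux

/-- From a `(κ,κ⁺)`-cardinal one obtains a `κ`-Kurepa tree: the tree of restrictions of the
functions `f_α(ξ) = otp(μ_ξ(α))` is a subtree of `κ^{<κ}` of height `κ`, with levels of
size `< κ` and at least `κ⁺` many branches of length `κ`. -/
theorem kurepa_tree (κ : Cardinal) (hκ : κ.IsRegular) (M : TwoCardinal κ) :
    -- the functions take values below κ, so the tree is a subtree of κ^{<κ}
    (∀ α : Ordinal, α < (Order.succ κ).ord → ∀ ξ : Ordinal, ξ < κ.ord →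
      otp (M.seq α ξ) < κ.ord) ∧
    -- every level (for ξ < κ, so the tree has height κ) has size < κ
    (∀ ξ : Ordinal, ξ < κ.ord →
      #{t : Ordinal → Ordinal | ∃ α : Ordinal, α < (Order.succ κ).ord ∧
        t = fun η => if η < ξ then otp (M.seq α η) else 0} < Cardinal.lift.{1} κ) ∧
    -- there are at least κ⁺ many branches of length κ
    Cardinal.lift.{1} (Order.succ κ) ≤
      #{b : Ordinal → Ordinal | ∃ α : Ordinal, α < (Order.succ κ).ord ∧
        b = fun η => if η < κ.ord then otp (M.seq α η) else 0} := by
  open KurepaAux in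
  refine ⟨?_, ?_, ?_⟩
  · -- values below κ
    intro α hα ξ hξ
    by_cases hw : ∃ X : M.mu, M.rank X = ξ ∧ α ∈ (X : Set Ordinal)
    · obtain ⟨X, h1, h2⟩ := hw
      rw [seq_eq hκ h1 h2]
      refine Cardinal.lt_ord.2 ?_
      exact lt_of_le_of_lt (Ordinal.card_le_card
        (otp_mono (bddM X) Set.inter_subset_left)) (M.mem_small X X.2)
    · rw [seq_empty hw, otp_empty]
      have h1 : (0 : Cardinal).ord < κ.ord := Cardinal.ord_lt_ord.2 hκ.pos
      rw [Cardinal.ord_zero] at h1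
      exact h1
  · -- small levels
    intro ξ hξ
    obtain ⟨X₀, hX₀⟩ := exists_rank hκ M hξ
    have hsel : ∀ t : ↥{t : Ordinal → Ordinal | ∃ α : Ordinal, α < (Order.succ κ).ord ∧
        t = fun η => if η < ξ then otp (M.seq α η) else 0},
        ∃ (α : Ordinal) (Z : M.mu), α < (Order.succ κ).ord ∧
          (t : Ordinal → Ordinal) = (fun η => if η < ξ then otp (M.seq α η) else 0) ∧
          M.rank Z = ξ ∧ α ∈ (Z : Set Ordinal) := by
      rintro ⟨t, α, hα, rfl⟩
      obtain ⟨Z, h1, h2⟩ := exists_mem_rank hκ hα hξ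
      exact ⟨α, Z, hα, rfl, h1, h2⟩
    choose av Zv hv1 hv2 hv3 hv4 using hsel
    have hwfZ : ∀ t, M.wf.rank (Zv t) = Ordinal.lift.{1} ξ := by
      intro t
      rw [← rank_spec hκ (Zv t), hv3 t]
    have hval : ∀ t, otp ((Zv t : Set Ordinal) ∩ Set.Iio (av t)) < otp (X₀ : Set Ordinal) := by
      intro t
      have hz : M.wf.rank (Zv t) = M.wf.rank X₀ := by rw [hwfZ t, hX₀]
      rw [← homog_otp hz]
      exact pos_lt_otp (hv4 t) (bddM _)
    have hinj : Function.Injective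
        (fun t => (⟨otp ((Zv t : Set Ordinal) ∩ Set.Iio (av t)), hval t⟩ :
          ↥(Set.Iio (otp (X₀ : Set Ordinal))))) := by
      intro t t' heq
      have heq2 : otp ((Zv t' : Set Ordinal) ∩ Set.Iio (av t')) =
          otp ((Zv t : Set Ordinal) ∩ Set.Iio (av t)) := (congrArg Subtype.val heq).symm
      have hzz : M.wf.rank (Zv t) = M.wf.rank (Zv t') := by rw [hwfZ t, hwfZ t']
      have hg : omap (Zv t : Set Ordinal) (Zv t' : Set Ordinal) (av t) = av t' :=
        omap_eq (bddM (Zv t')) (hv4 t') heq2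
      refine Subtype.ext ?_
      rw [hv2 t, hv2 t']
      funext η
      by_cases hlt : η < ξ
      · rw [if_pos hlt, if_pos hlt]
        have h5 : Ordinal.lift.{1} η < M.wf.rank (Zv t) := by
          rw [hwfZ t]
          exact Ordinal.lift_lt.2 hlt
        have h6 := transfer hκ hzz (hv4 t) h5
        rw [hg] at h6
        rw [h6]
      · rw [if_neg hlt, if_neg hlt]
    refine lt_of_le_of_lt (Cardinal.mk_le_of_injective hinj) ?_
    rw [Ordinal.mk_Iio_ordinal]
    exact Cardinal.lift_lt.2 (M.mem_small X₀ X₀.2)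
  · -- many branches
    have haux : ∀ {α β : Ordinal}, α < (Order.succ κ).ord → β < (Order.succ κ).ord → α < β →
        (fun η => if η < κ.ord then otp (M.seq α η) else 0) ≠
          (fun η => if η < κ.ord then otp (M.seq β η) else 0) := by
      intro α β hα hβ hαβ hfeq
      obtain ⟨W, hαW, hβW⟩ := mem_of_pair M hα hβ
      have hη : M.rank W < κ.ord := rank_lt_ord hκ W
      have h1 := congrFun hfeq (M.rank W)
      rw [if_pos hη, if_pos hη, seq_eq hκ rfl hαW, seq_eq hκ rfl hβW] at h1
      exact absurd h1 (pos_lt_pos hαW hβW (bddM W) hαβ).ne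
    have hinj : Function.Injective (fun α : ↥(Set.Iio (Order.succ κ).ord) =>
        (⟨fun η => if η < κ.ord then otp (M.seq (α : Ordinal) η) else 0,
          ⟨(α : Ordinal), α.2, rfl⟩⟩ :
          ↥{b : Ordinal → Ordinal | ∃ α : Ordinal, α < (Order.succ κ).ord ∧
            b = fun η => if η < κ.ord then otp (M.seq α η) else 0})) := by
      intro α β heq
      have heq2 := congrArg Subtype.val heq
      simp only at heq2
      refine Subtype.ext ?_
      rcases lt_trichotomy (α : Ordinal) (β : Ordinal) with h1 | h1 | h1
      · exact absurd heq2 (haux α.2 β.2 h1)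
      · exact h1
      · exact absurd heq2.symm (haux β.2 α.2 h1)
    have h2 : Cardinal.lift.{1} (Order.succ κ) = #(↥(Set.Iio (Order.succ κ).ord)) := by
      rw [Ordinal.mk_Iio_ordinal, Cardinal.card_ord]
    rw [h2]
    exact Cardinal.mk_le_of_injective hinj
end
end
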